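/- For all natural numbers m and all h with 0 ≤ h ≤ 2^m, the sum over all binary words w of length 2^m of Hamming weight h of (1/2)^{c(w)} equals γ(h, m): Σ_{w ∈ {0,1}^{2^m}, weight(w) = h} (1/2)^{c(w)} = γ(h, m). (This identifies γ(h,m)/binom(2^m,h) as the average over uniformly random placements of h marked positions of (1/2) raised to the number of binary-tree nodes at which the two halves carry different numbers of marked positions.) -/

import Mathlib

/-- The recursively defined quantity `γ(h, m)` bounding the soundness of the
Iterated Swap Tree: `γ(0,m) = γ(1,m) = 1`, `γ(h,0) = 0` for `h ≥ 2`, and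
`γ(h, m) = ∑_{k=0}^{⌊h/2⌋} γ(k, m-1) γ(h-k, m-1)` for `h ≥ 2`, `m ≥ 1`. -/
def gamma : ℕ → ℕ → ℚ
  | 0, _ => 1
  | 1, _ => 1
  | _ + 2, 0 => 0
  | h + 2, m + 1 => ∑ k ∈ Finset.range ((h + 2) / 2 + 1), gamma k m * gamma (h + 2 - k) m
  termination_by h m => m

/-- The Hamming weight of a binary word. -/
def wt {N : ℕ} (w : Fin N → Bool) : ℕ := (Finset.univ.filter fun j => w j = true).card

/-- The click count `c(w)` of a binary word of length `2^m`: recursively, the number of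
binary-tree nodes at which the two halves carry different numbers of ones. -/
def clicks : (m : ℕ) → (Fin (2 ^ m) → Bool) → ℕ
  | 0, _ => 0
  | m + 1, w =>
    let wL : Fin (2 ^ m) → Bool := fun j =>
      w ⟨j, lt_of_lt_of_le j.isLt (Nat.pow_le_pow_right (by norm_num) (Nat.le_succ m))⟩
    let wR : Fin (2 ^ m) → Bool := fun j =>
      w ⟨2 ^ m + j, by have := j.isLt; rw [pow_succ]; omega⟩
    clicks m wL + clicks m wR + (if wt wL = wt wR then 0 else 1)

namespace ISTaux

def lH (m : ℕ) (w : Fin (2^(m+1)) → Bool) : Fin (2^m) → Bool :=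
  fun j => w ⟨j, lt_of_lt_of_le j.isLt (Nat.pow_le_pow_right (by norm_num) (Nat.le_succ m))⟩

def rH (m : ℕ) (w : Fin (2^(m+1)) → Bool) : Fin (2^m) → Bool :=
  fun j => w ⟨2^m + j, by have := j.isLt; rw [pow_succ]; omega⟩

lemma clicks_succ (m : ℕ) (w : Fin (2^(m+1)) → Bool) :
    clicks (m+1) w = clicks m (lH m w) + clicks m (rH m w) +
      (if wt (lH m w) = wt (rH m w) then 0 else 1) := rfl

def pair (m : ℕ) (u v : Fin (2^m) → Bool) : Fin (2^(m+1)) → Bool :=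
  fun j => if h : (j : ℕ) < 2^m then u ⟨j, h⟩
    else v ⟨(j:ℕ) - 2^m, by
      have h1 := j.isLt
      have h2 : (2:ℕ)^(m+1) = 2^m + 2^m := by rw [pow_succ]; omega
      omega⟩

lemma lH_pair (m : ℕ) (u v : Fin (2^m) → Bool) : lH m (pair m u v) = u := by
  funext j; simp [lH, pair, j.isLt]

lemma rH_pair (m : ℕ) (u v : Fin (2^m) → Bool) : rH m (pair m u v) = v := by
  funext j
  simp only [rH, pair]
  rw [dif_neg (by omega)]
  congr 1
  exact Fin.ext (by simp)

lemma pair_lH_rH (m : ℕ) (w : Fin (2^(m+1)) → Bool) : pair m (lH m w) (rH m w) = w := by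
  funext j
  by_cases hj : (j:ℕ) < 2^m
  · simp only [pair, lH, dif_pos hj]
  · simp only [pair, rH, dif_neg hj]
    congr 1
    exact Fin.ext (by simp; omega)

def pairEquiv (m : ℕ) : ((Fin (2^m) → Bool) × (Fin (2^m) → Bool)) ≃ (Fin (2^(m+1)) → Bool) where
  toFun p := pair m p.1 p.2
  invFun w := (lH m w, rH m w)
  left_inv p := by ext <;> simp [lH_pair, rH_pair]
  right_inv w := pair_lH_rH m w

lemma wt_le {N : ℕ} (w : Fin N → Bool) : wt w ≤ N :=
  (Finset.card_filter_le _ _).trans (by simp)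

lemma wt_eq_sum {N : ℕ} (w : Fin N → Bool) : wt w = ∑ j, (if w j = true then 1 else 0) := by
  rw [wt, Finset.card_filter]

lemma two_pow_succ (m : ℕ) : 2^(m+1) = 2^m + 2^m := by rw [pow_succ]; omega

lemma wt_split (m : ℕ) (w : Fin (2^(m+1)) → Bool) : wt w = wt (lH m w) + wt (rH m w) := by
  rw [wt_eq_sum, wt_eq_sum, wt_eq_sum]
  rw [Fintype.sum_equiv (finCongr (two_pow_succ m))
    (fun j : Fin (2^(m+1)) => if w j = true then 1 else 0)
    (fun j : Fin (2^m + 2^m) => if w ((finCongr (two_pow_succ m)).symm j) = true then 1 else 0)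
    (fun j => by simp)]
  rw [Fin.sum_univ_add]
  rfl

lemma collapse (f : ℕ → ℚ) (N h : ℕ) (hf : ∀ a, N < a → f a = 0) :
    ∑ a ∈ Finset.range (N+1), ∑ b ∈ Finset.range (N+1),
        (if a + b = h then (if a = b then 1 else (1/2:ℚ)) * (f a * f b) else 0)
    = ∑ k ∈ Finset.range (h+1), (if k = h - k then 1 else (1/2:ℚ)) * (f k * f (h-k)) := by
  have h1 : ∀ a, (∑ b ∈ Finset.range (N+1),
        (if a + b = h then (if a = b then 1 else (1/2:ℚ)) * (f a * f b) else 0))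
      = if a ≤ h then (if a = h-a then 1 else (1/2:ℚ)) * (f a * f (h-a)) else 0 := by
    intro a
    by_cases hah : a ≤ h ∧ h - a ≤ N
    · rw [Finset.sum_eq_single (h-a), if_pos (by omega), if_pos hah.1]
      · intro b _ hne; rw [if_neg (by omega)]
      · intro hmem; exact absurd (Finset.mem_range.mpr (by omega)) hmem
    · rcases Decidable.not_and_iff_or_not.mp hah with hc | hc
      · rw [if_neg hc]
        apply Finset.sum_eq_zero; intro b hb
        rw [if_neg (by omega)]
      · have hfz : f (h - a) = 0 := hf _ (by omega)
        rw [hfz]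
        have : ∀ b ∈ Finset.range (N+1),
            (if a + b = h then (if a = b then 1 else (1/2:ℚ)) * (f a * f b) else 0) = 0 := by
          intro b hb
          simp only [Finset.mem_range] at hb
          by_cases hab : a + b = h
          · have : b = h - a := by omega
            rw [if_pos hab, this, hfz, mul_zero, mul_zero]
          · rw [if_neg hab]
        rw [Finset.sum_eq_zero this, mul_zero, mul_zero, ite_self]
  rw [Finset.sum_congr rfl fun a _ => h1 a]
  rw [Finset.sum_subset (Finset.range_subset_range.mpr (show N+1 ≤ N+h+1 by omega)
      : Finset.range (N+1) ⊆ Finset.range (N+h+1))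
    (fun a _ ha => by
      simp only [Finset.mem_range] at ha
      by_cases hah : a ≤ h
      · rw [if_pos hah, hf a (by omega), zero_mul, mul_zero]
      · rw [if_neg hah])]
  rw [← Finset.sum_subset (Finset.range_subset_range.mpr (show h+1 ≤ N+h+1 by omega)
      : Finset.range (h+1) ⊆ Finset.range (N+h+1))
    (fun a _ ha => by
      simp only [Finset.mem_range] at ha
      rw [if_neg (by omega)])]
  apply Finset.sum_congr rfl
  intro a ha
  simp only [Finset.mem_range] at ha
  rw [if_pos (by omega)]

lemma reflect (f : ℕ → ℚ) (h : ℕ) :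
    ∑ k ∈ Finset.range (h+1), (if k = h - k then 1 else (1/2:ℚ)) * (f k * f (h-k))
    = ∑ k ∈ Finset.range (h/2+1), f k * f (h-k) := by
  set g : ℕ → ℚ := fun k => f k * f (h-k) with hgdef
  have hg : ∀ k ≤ h, g (h-k) = g k := by
    intro k hk
    simp only [hgdef]
    rw [Nat.sub_sub_self hk, mul_comm]
  have split : ∑ k ∈ Finset.range (h+1), (if k = h - k then 1 else (1/2:ℚ)) * g k
      = (∑ k ∈ Finset.range (h/2+1), (if k = h - k then 1 else (1/2:ℚ)) * g k)
        + ∑ k ∈ Finset.Ico (h/2+1) (h+1), (if k = h - k then 1 else (1/2:ℚ)) * g k := by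
    rw [Finset.range_eq_Ico, Finset.range_eq_Ico]
    exact (Finset.sum_Ico_consecutive (fun k => (if k = h - k then 1 else (1/2:ℚ)) * g k) (Nat.zero_le _) (by omega : h/2+1 ≤ h+1)).symm
  have B : ∑ k ∈ Finset.Ico (h/2+1) (h+1), (if k = h - k then 1 else (1/2:ℚ)) * g k
      = ∑ j ∈ Finset.range ((h+1)/2), (1/2:ℚ) * g j := by
    apply Finset.sum_bij' (fun k _ => h - k) (fun j _ => h - j)
    · intro k hk
      simp only [Finset.mem_Ico] at hk
      simp only [Finset.mem_range]
      omega
    · intro j hj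
      simp only [Finset.mem_range] at hj
      simp only [Finset.mem_Ico]
      omega
    · intro k hk
      simp only [Finset.mem_Ico] at hk
      omega
    · intro j hj
      simp only [Finset.mem_range] at hj
      omega
    · intro k hk
      simp only [Finset.mem_Ico] at hk
      rw [if_neg (by omega), hg k (by omega)]
  rw [split, B]
  rcases Nat.even_or_odd h with ⟨q, hq⟩ | ⟨q, hq⟩
  · have e1 : h / 2 = q := by omega
    have e2 : (h+1) / 2 = q := by omega
    rw [e1, e2, Finset.sum_range_succ, Finset.sum_range_succ]
    have w1 : ∀ k ∈ Finset.range q, (if k = h - k then 1 else (1/2:ℚ)) * g k = (1/2:ℚ) * g k := by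
      intro k hk
      simp only [Finset.mem_range] at hk
      rw [if_neg (by omega)]
    rw [Finset.sum_congr rfl w1, if_pos (by omega)]
    have comb : ∑ x ∈ Finset.range q, (1/2:ℚ) * g x + 1 * g q + ∑ x ∈ Finset.range q, (1/2:ℚ) * g x
        = ∑ x ∈ Finset.range q, g x + g q := by
      rw [add_comm (∑ x ∈ Finset.range q, (1/2:ℚ) * g x + 1 * g q), ← add_assoc,
        ← Finset.sum_add_distrib]
      congr 1
      · apply Finset.sum_congr rfl; intro k _; ring
      · ring
    exact comb
  · have e1 : h / 2 = q := by omega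
    have e2 : (h+1) / 2 = q + 1 := by omega
    rw [e1, e2]
    have w1 : ∀ k ∈ Finset.range (q+1), (if k = h - k then 1 else (1/2:ℚ)) * g k = (1/2:ℚ) * g k := by
      intro k hk
      simp only [Finset.mem_range] at hk
      rw [if_neg (by omega)]
    rw [Finset.sum_congr rfl w1, ← Finset.sum_add_distrib]
    apply Finset.sum_congr rfl
    intro k _
    show (1/2:ℚ) * g k + (1/2:ℚ) * g k = g k
    ring

lemma fiber {m : ℕ} (F : ℕ → (Fin (2^m) → Bool) → ℚ) :
    ∑ u : Fin (2^m) → Bool, F (wt u) u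
      = ∑ a ∈ Finset.range (2^m+1), ∑ u ∈ Finset.univ.filter (fun u => wt u = a), F a u := by
  rw [← Finset.sum_fiberwise_of_maps_to
    (fun u _ => Finset.mem_range.mpr (Nat.lt_succ_of_le (wt_le u)))
    (fun u => F (wt u) u)]
  exact Finset.sum_congr rfl fun a _ => Finset.sum_congr rfl fun u hu => by
    rw [(Finset.mem_filter.mp hu).2]

lemma key : ∀ m h : ℕ, ∑ w ∈ Finset.univ.filter (fun w : Fin (2 ^ m) → Bool => wt w = h),
      ((1 : ℚ) / 2) ^ clicks m w = gamma h m := by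
  intro m
  induction m with
  | zero =>
    intro h
    simp only [show ∀ w : Fin (2^0) → Bool, clicks 0 w = 0 from fun _ => rfl, pow_zero]
    rw [Finset.sum_const, nsmul_eq_mul, mul_one]
    match h with
    | 0 =>
      rw [show (Finset.univ.filter fun w : Fin (2^0) → Bool => wt w = 0).card = 1 by decide]
      simp [gamma]
    | 1 =>
      rw [show (Finset.univ.filter fun w : Fin (2^0) → Bool => wt w = 1).card = 1 by decide]
      simp [gamma]
    | (k+2) =>
      rw [show gamma (k+2) 0 = 0 by simp [gamma]]
      rw [Finset.filter_eq_empty_iff.mpr (fun w _ => by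
        have := wt_le w; norm_num at this; omega), Finset.card_empty]
      norm_num
  | succ m ih =>
    intro h
    set S : ℕ → ℚ := fun a => ∑ u ∈ Finset.univ.filter (fun u : Fin (2^m) → Bool => wt u = a),
      ((1:ℚ)/2) ^ clicks m u with hSdef
    have hS : ∀ a, S a = gamma a m := fun a => ih a
    have hSz : ∀ a, 2^m < a → S a = 0 := by
      intro a ha
      rw [hSdef]
      simp only
      rw [Finset.filter_eq_empty_iff.mpr (fun w _ => by have := wt_le w; omega),
        Finset.sum_empty]
    have step1 : (∑ w ∈ Finset.univ.filter (fun w : Fin (2^(m+1)) → Bool => wt w = h),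
          ((1:ℚ)/2)^clicks (m+1) w)
        = ∑ u : Fin (2^m) → Bool, ∑ v : Fin (2^m) → Bool,
            (if wt u + wt v = h then
              (if wt u = wt v then 1 else (1/2:ℚ)) *
                (((1:ℚ)/2)^clicks m u * ((1:ℚ)/2)^clicks m v)
            else 0) := by
      rw [Finset.sum_filter]
      rw [← Equiv.sum_comp (pairEquiv m)
        (fun w => if wt w = h then ((1:ℚ)/2)^clicks (m+1) w else 0)]
      rw [Fintype.sum_prod_type]
      apply Finset.sum_congr rfl; intro u _
      apply Finset.sum_congr rfl; intro v _
      show (if wt (pair m u v) = h then ((1:ℚ)/2)^clicks (m+1) (pair m u v) else 0) = _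
      rw [wt_split, lH_pair, rH_pair, clicks_succ, lH_pair, rH_pair]
      by_cases hw : wt u = wt v <;> by_cases hc : wt u + wt v = h <;>
        simp [hw, hc, pow_add] <;> ring
    have step2 : (∑ u : Fin (2^m) → Bool, ∑ v : Fin (2^m) → Bool,
            (if wt u + wt v = h then
              (if wt u = wt v then 1 else (1/2:ℚ)) *
                (((1:ℚ)/2)^clicks m u * ((1:ℚ)/2)^clicks m v)
            else 0))
        = ∑ a ∈ Finset.range (2^m+1), ∑ b ∈ Finset.range (2^m+1),
            (if a + b = h then (if a = b then 1 else (1/2:ℚ)) * (S a * S b) else 0) := by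
      rw [fiber (fun a u => ∑ v : Fin (2^m) → Bool,
            (if a + wt v = h then
              (if a = wt v then 1 else (1/2:ℚ)) *
                (((1:ℚ)/2)^clicks m u * ((1:ℚ)/2)^clicks m v)
            else 0))]
      apply Finset.sum_congr rfl; intro a _
      have inner : ∀ u : Fin (2^m) → Bool,
          (∑ v : Fin (2^m) → Bool,
            (if a + wt v = h then
              (if a = wt v then 1 else (1/2:ℚ)) *
                (((1:ℚ)/2)^clicks m u * ((1:ℚ)/2)^clicks m v)
            else 0))
          = ∑ b ∈ Finset.range (2^m+1),
              (if a + b = h then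
                (if a = b then 1 else (1/2:ℚ)) * (((1:ℚ)/2)^clicks m u * S b) else 0) := by
        intro u
        rw [fiber (fun b v =>
            (if a + b = h then
              (if a = b then 1 else (1/2:ℚ)) *
                (((1:ℚ)/2)^clicks m u * ((1:ℚ)/2)^clicks m v)
            else 0))]
        apply Finset.sum_congr rfl; intro b _
        by_cases hc : a + b = h
        · simp only [if_pos hc]
          rw [← Finset.mul_sum, ← Finset.mul_sum]
        · simp only [if_neg hc, Finset.sum_const_zero]
      rw [Finset.sum_congr rfl fun u _ => inner u]
      rw [Finset.sum_comm]
      apply Finset.sum_congr rfl; intro b _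
      by_cases hc : a + b = h
      · simp only [if_pos hc]
        rw [← Finset.mul_sum]
        congr 1
        rw [← Finset.sum_mul]
      · simp only [if_neg hc, Finset.sum_const_zero]
    rw [step1, step2, collapse S (2^m) h hSz, reflect S h]
    rw [Finset.sum_congr rfl fun k _ => by rw [hS k, hS (h-k)]]
    match h with
    | 0 => simp [gamma]
    | 1 => simp [gamma]
    | (k+2) => rw [gamma]

end ISTaux

/-- `∑_{w : weight(w) = h} (1/2)^{c(w)} = γ(h, m)`. -/
theorem sum_half_pow_clicks (m h : ℕ) (hh : h ≤ 2 ^ m) :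
    ∑ w ∈ Finset.univ.filter (fun w : Fin (2 ^ m) → Bool => wt w = h),
      ((1 : ℚ) / 2) ^ clicks m w = gamma h m := ISTaux.key m h
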